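/- (Descent lemma for one Muon step.) Let f : ℝ^{m×n} → ℝ be differentiable and L-smooth, let X, M ∈ ℝ^{m×n}, and let O ∈ ℝ^{m×n} satisfy Oᵀ O = I_n and ⟨M, O⟩_F = ‖M‖_∗. Set X' = X − η O for some η > 0. Then for every α > 0, f(X') ≤ f(X) − η ‖M‖_F + (η α / 2) ‖∇f(X) − M‖_F² + η n / (2α) + L η² n / 2. -/

import Mathlib

open Real Matrix
open scoped RealInnerProductSpace

/-- The `m × n` matrix associated to an element of `EuclideanSpace ℝ (Fin m × Fin n)`
(whose norm is the Frobenius norm and whose inner product is the Frobenius inner product). -/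
noncomputable def toMat {m n : ℕ} (A : EuclideanSpace ℝ (Fin m × Fin n)) :
    Matrix (Fin m) (Fin n) ℝ :=
  Matrix.of fun i j => A (i, j)

/-- The nuclear norm of a real matrix: the sum of its singular values, i.e. of the
square roots of the eigenvalues of `Mᴴ M = Mᵀ M`. -/
noncomputable def nuclearNorm {m n : ℕ} (M : Matrix (Fin m) (Fin n) ℝ) : ℝ :=
  ∑ i, Real.sqrt ((Matrix.isHermitian_conjTranspose_mul_self M).eigenvalues i)

lemma sum_eig_eq_trace {n : ℕ} (A : Matrix (Fin n) (Fin n) ℝ) (hA : A.IsHermitian) :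
    ∑ i, hA.eigenvalues i = A.trace := by
  rw [hA.trace_eq_sum_eigenvalues]
  simp

lemma norm_sq_eq_trace {m n : ℕ} (A : EuclideanSpace ℝ (Fin m × Fin n)) :
    ‖A‖ ^ 2 = ((toMat A)ᵀ * toMat A).trace := by
  rw [← real_inner_self_eq_norm_sq]
  simp only [PiLp.inner_apply, RCLike.inner_apply, conj_trivial, Matrix.trace,
    Matrix.diag_apply, Matrix.mul_apply, Matrix.transpose_apply, toMat, Matrix.of_apply]
  rw [Fintype.sum_prod_type]
  rw [Finset.sum_comm]

lemma frob_le_nuclear {m n : ℕ} (A : EuclideanSpace ℝ (Fin m × Fin n)) :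
    ‖A‖ ≤ nuclearNorm (toMat A) := by
  have hpsd := Matrix.posSemidef_conjTranspose_mul_self (toMat A)
  have hH := Matrix.isHermitian_conjTranspose_mul_self (toMat A)
  have heig : ∀ i, 0 ≤ hH.eigenvalues i := by
    intro i
    simpa using hpsd.eigenvalues_nonneg i
  have htr : ‖A‖ ^ 2 = ∑ i, hH.eigenvalues i := by
    rw [norm_sq_eq_trace, ← Matrix.conjTranspose_eq_transpose_of_trivial, ← sum_eig_eq_trace _ hH]
  have hsq : ∑ i, hH.eigenvalues i ≤ (∑ i, Real.sqrt (hH.eigenvalues i)) ^ 2 := by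
    have := Finset.sum_sq_le_sq_sum_of_nonneg
      (f := fun i => Real.sqrt (hH.eigenvalues i)) (s := Finset.univ)
      (fun i _ => Real.sqrt_nonneg _)
    simpa only [fun i => Real.sq_sqrt (heig i)] using this
  have h1 : ‖A‖ ^ 2 ≤ (nuclearNorm (toMat A)) ^ 2 := by
    rw [htr]; exact hsq
  have h2 : 0 ≤ nuclearNorm (toMat A) :=
    Finset.sum_nonneg fun i _ => Real.sqrt_nonneg _
  nlinarith [norm_nonneg A]

lemma inner_eq_trace {m n : ℕ} (A B : EuclideanSpace ℝ (Fin m × Fin n)) :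
    ⟪A, B⟫ = ((toMat A)ᵀ * toMat B).trace := by
  simp only [PiLp.inner_apply, RCLike.inner_apply, conj_trivial, Matrix.trace,
    Matrix.diag_apply, Matrix.mul_apply, Matrix.transpose_apply, toMat, Matrix.of_apply]
  rw [Fintype.sum_prod_type]
  rw [Finset.sum_comm]
  exact Finset.sum_congr rfl fun _ _ => Finset.sum_congr rfl fun _ _ => mul_comm _ _
lemma descent_aux {E : Type*} [NormedAddCommGroup E] [InnerProductSpace ℝ E] [CompleteSpace E]
    (f : E → ℝ) (f' : E → E) (L : ℝ) (hL : 0 ≤ L)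
    (hgrad : ∀ Y, HasGradientAt f (f' Y) Y)
    (hsmooth : ∀ Y₁ Y₂, ‖f' Y₂ - f' Y₁‖ ≤ L * ‖Y₂ - Y₁‖)
    (X V : E) : f (X + V) ≤ f X + ⟪f' X, V⟫ + L / 2 * ‖V‖ ^ 2 := by
  set φ : ℝ → ℝ := fun t => f (X + t • V) - t * ⟪f' X, V⟫ - L * ‖V‖ ^ 2 * t ^ 2 / 2 with hφ
  have hderiv : ∀ t : ℝ, HasDerivAt φ
      (⟪f' (X + t • V), V⟫ - ⟪f' X, V⟫ - L * ‖V‖ ^ 2 * t) t := by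
    intro t
    have hc : HasDerivAt (fun t : ℝ => X + t • V) V t := by
      simpa using ((hasDerivAt_id t).smul_const V).const_add X
    have h1 : HasDerivAt (fun t : ℝ => f (X + t • V)) ⟪f' (X + t • V), V⟫ t := by
      have := ((hgrad (X + t • V)).hasFDerivAt).comp_hasDerivAt t hc
      simpa [Function.comp_def] using this
    have h2 : HasDerivAt (fun t : ℝ => t * ⟪f' X, V⟫) ⟪f' X, V⟫ t := by
      simpa using (hasDerivAt_id t).mul_const (⟪f' X, V⟫)
    have h3 : HasDerivAt (fun t : ℝ => L * ‖V‖ ^ 2 * t ^ 2 / 2) (L * ‖V‖ ^ 2 * t) t := by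
      have := ((hasDerivAt_pow 2 t).const_mul (L * ‖V‖ ^ 2)).div_const 2
      exact this.congr_deriv (by ring)
    exact (h1.sub h2).sub h3
  have hmono : AntitoneOn φ (Set.Icc (0:ℝ) 1) := by
    apply antitoneOn_of_deriv_nonpos (convex_Icc 0 1)
    · exact Continuous.continuousOn (by
        exact continuous_iff_continuousAt.2 fun t => (hderiv t).continuousAt)
    · intro t ht
      exact (hderiv t).differentiableAt.differentiableWithinAt
    · intro t ht
      rw [interior_Icc] at ht
      rw [(hderiv t).deriv]
      have hb : ⟪f' (X + t • V) - f' X, V⟫ ≤ L * t * ‖V‖ ^ 2 := by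
        calc ⟪f' (X + t • V) - f' X, V⟫ ≤ ‖f' (X + t • V) - f' X‖ * ‖V‖ :=
              real_inner_le_norm _ _
          _ ≤ (L * ‖(X + t • V) - X‖) * ‖V‖ := by
              have := hsmooth X (X + t • V)
              exact mul_le_mul_of_nonneg_right this (norm_nonneg _)
          _ = L * t * ‖V‖ ^ 2 := by
              rw [add_sub_cancel_left, norm_smul]
              simp [abs_of_pos ht.1]
              ring
      have : ⟪f' (X + t • V), V⟫ - ⟪f' X, V⟫ = ⟪f' (X + t • V) - f' X, V⟫ := by
        rw [inner_sub_left]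
      nlinarith [hb, this]
  have := hmono (Set.left_mem_Icc.2 zero_le_one) (Set.right_mem_Icc.2 zero_le_one) zero_le_one
  simp only [hφ, zero_smul, add_zero, zero_mul, one_smul, one_mul, one_pow] at this
  nlinarith [this]

/-- **Descent lemma for one Muon step** (Lemma 1): if `f` is `L`-smooth, `Oᵀ O = I_n`,
`⟨M, O⟩_F = ‖M‖_*`, and `X' = X - η O`, then for every `α > 0`,
`f(X') ≤ f(X) - η ‖M‖_F + (η α / 2) ‖∇f(X) - M‖_F² + η n / (2α) + L η² n / 2`. -/
theorem muon_descent_lemma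
    (m n : ℕ) (hmn : n ≤ m) (hn : 1 ≤ n)
    (f : EuclideanSpace ℝ (Fin m × Fin n) → ℝ)
    (f' : EuclideanSpace ℝ (Fin m × Fin n) → EuclideanSpace ℝ (Fin m × Fin n))
    (L : ℝ) (hL : 0 < L)
    (hgrad : ∀ Y, HasGradientAt f (f' Y) Y)
    (hsmooth : ∀ Y₁ Y₂, ‖f' Y₂ - f' Y₁‖ ≤ L * ‖Y₂ - Y₁‖)
    (X M O : EuclideanSpace ℝ (Fin m × Fin n))
    (hO : (toMat O)ᵀ * toMat O = 1)
    (hMO : ⟪M, O⟫ = nuclearNorm (toMat M))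
    (η : ℝ) (hη : 0 < η) (α : ℝ) (hα : 0 < α) :
    f (X - η • O) ≤ f X - η * ‖M‖ + (η * α / 2) * ‖f' X - M‖ ^ 2
      + η * n / (2 * α) + L * η ^ 2 * n / 2 := by
  have hOn : ‖O‖ ^ 2 = (n : ℝ) := by
    rw [norm_sq_eq_trace, hO, Matrix.trace_one]
    simp
  have hkey := descent_aux f f' L hL.le hgrad hsmooth X (-(η • O))
  rw [← sub_eq_add_neg] at hkey
  have hV : ‖-(η • O)‖ ^ 2 = η ^ 2 * n := by
    rw [norm_neg, norm_smul, mul_pow, hOn]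
    simp [abs_of_pos hη]
  have hinner : ⟪f' X, -(η • O)⟫ =
      -(η * (nuclearNorm (toMat M) + ⟪f' X - M, O⟫)) := by
    rw [inner_neg_right, real_inner_smul_right, inner_sub_left, ← hMO]
    ring
  have hnuc : ‖M‖ ≤ nuclearNorm (toMat M) := by
    have := frob_le_nuclear M
    convert this using 2
  have hip : -⟪f' X - M, O⟫ ≤ α / 2 * ‖f' X - M‖ ^ 2 + (n : ℝ) / (2 * α) := by
    have h1 : -⟪f' X - M, O⟫ ≤ ‖f' X - M‖ * ‖O‖ := by
      have h := abs_real_inner_le_norm (f' X - M) O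
      have := neg_le_of_abs_le h
      linarith
    have hkey2 : α / 2 * ‖f' X - M‖ ^ 2 + ‖O‖ ^ 2 / (2 * α) - ‖f' X - M‖ * ‖O‖
        = (α * ‖f' X - M‖ - ‖O‖) ^ 2 / (2 * α) := by
      field_simp
      ring
    have hpos := div_nonneg (sq_nonneg (α * ‖f' X - M‖ - ‖O‖))
      (by positivity : (0:ℝ) ≤ 2 * α)
    rw [← hOn]
    linarith
  rw [hinner, hV] at hkey
  have hexp : -(η * (nuclearNorm (toMat M) + ⟪f' X - M, O⟫))
      = -(η * nuclearNorm (toMat M)) + η * (-⟪f' X - M, O⟫) := by ring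
  rw [hexp] at hkey
  have h2 := mul_le_mul_of_nonneg_left hnuc hη.le
  have h3 := mul_le_mul_of_nonneg_left hip hη.le
  have hdist : η * (α / 2 * ‖f' X - M‖ ^ 2 + (n : ℝ) / (2 * α))
      = η * α / 2 * ‖f' X - M‖ ^ 2 + η * (n : ℝ) / (2 * α) := by ring
  have hL2 : L / 2 * (η ^ 2 * (n : ℝ)) = L * η ^ 2 * (n : ℝ) / 2 := by ring
  linarith
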